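/- For every ε > 0, the second derivative k''_ε of k_ε satisfies k''_ε(r) ≥ 0 for every r ∈ ℝ. -/

import Mathlib

open Set Filter

/-- The C²-regularization `k_ε` of the squared negative part. -/
noncomputable def kEps (ε : ℝ) : ℝ → ℝ := fun r =>
  if r < -ε then r ^ 2 - ε ^ 2 / 6
  else if r < 0 then -(r ^ 3 / ε) * (r / (2 * ε) + 4 / 3)
  else 0

noncomputable def kEps' (ε : ℝ) : ℝ → ℝ := fun r =>
  if r < -ε then 2 * r else if r < 0 then -(2 * r ^ 3 / ε ^ 2 + 4 * r ^ 2 / ε) else 0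

noncomputable def kEps'' (ε : ℝ) : ℝ → ℝ := fun r =>
  if r < -ε then 2 else if r < 0 then -(6 * r ^ 2 / ε ^ 2 + 8 * r / ε) else 0

/-- Gluing lemma for piecewise derivatives. -/
lemma glue {a d : ℝ} {f g F : ℝ → ℝ}
    (hleft : ∀ᶠ r in nhdsWithin a (Iic a), F r = f r)
    (hright : ∀ᶠ r in nhdsWithin a (Ici a), F r = g r)
    (hFa : F a = f a) (hFa' : F a = g a)
    (hf : HasDerivAt f d a) (hg : HasDerivAt g d a) : HasDerivAt F d a := by
  have h1 : HasDerivWithinAt F d (Iic a) a :=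
    (hf.hasDerivWithinAt).congr_of_eventuallyEq hleft hFa
  have h2 : HasDerivWithinAt F d (Ici a) a :=
    (hg.hasDerivWithinAt).congr_of_eventuallyEq hright hFa'
  have h3 := h1.union h2
  rw [Iic_union_Ici] at h3
  exact hasDerivWithinAt_univ.mp h3

lemma p2_hasDerivAt (ε : ℝ) (hε : 0 < ε) (r : ℝ) :
    HasDerivAt (fun x : ℝ => -(x ^ 3 / ε) * (x / (2 * ε) + 4 / 3))
      (-(2 * r ^ 3 / ε ^ 2 + 4 * r ^ 2 / ε)) r := by
  have h3 : HasDerivAt (fun x : ℝ => x ^ 3) (3 * r ^ 2) r := by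
    simpa using hasDerivAt_pow 3 r
  have h4 : HasDerivAt (fun x : ℝ => -(x ^ 3 / ε)) (-(3 * r ^ 2 / ε)) r :=
    (h3.div_const ε).neg
  have h5 : HasDerivAt (fun x : ℝ => x / (2 * ε) + 4 / 3) (1 / (2 * ε)) r :=
    ((hasDerivAt_id r).div_const (2 * ε)).add_const _
  have := h4.mul h5
  refine this.congr_deriv ?_
  field_simp
  ring

lemma p1_hasDerivAt (ε r : ℝ) :
    HasDerivAt (fun x : ℝ => x ^ 2 - ε ^ 2 / 6) (2 * r) r := by
  simpa using (hasDerivAt_pow 2 r).sub_const (ε ^ 2 / 6)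

lemma hasDerivAt_kEps (ε : ℝ) (hε : 0 < ε) (r : ℝ) :
    HasDerivAt (kEps ε) (kEps' ε r) r := by
  rcases lt_trichotomy r (-ε) with h | h | h
  · have heq : ∀ᶠ x in nhds r, kEps ε x = x ^ 2 - ε ^ 2 / 6 := by
      filter_upwards [Iio_mem_nhds h] with x (hx : x < -ε)
      simp [kEps, hx]
    have : HasDerivAt (kEps ε) (2 * r) r :=
      (p1_hasDerivAt ε r).congr_of_eventuallyEq heq
    simpa [kEps', h] using this
  · subst h
    have hk' : kEps' ε (-ε) = -2 * ε := by
      simp only [kEps', lt_irrefl, if_false, neg_lt_zero.mpr hε, if_true]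
      field_simp
      ring
    rw [hk']
    apply glue (f := fun x : ℝ => x ^ 2 - ε ^ 2 / 6)
      (g := fun x : ℝ => -(x ^ 3 / ε) * (x / (2 * ε) + 4 / 3))
    · filter_upwards [self_mem_nhdsWithin] with x (hx : x ≤ -ε)
      rcases lt_or_eq_of_le hx with hx | hx
      · simp [kEps, hx]
      · subst hx
        simp only [kEps, lt_irrefl, if_false, neg_lt_zero.mpr hε, if_true]
        field_simp
        ring
    · have hmem : Ico (-ε) 0 ∈ nhdsWithin (-ε) (Ici (-ε)) :=
        Ico_mem_nhdsGE (neg_lt_zero.mpr hε)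
      filter_upwards [hmem] with x hx
      simp [kEps, not_lt.mpr hx.1, hx.2]
    · simp only [kEps, lt_irrefl, if_false, neg_lt_zero.mpr hε, if_true]
      field_simp
      ring
    · simp [kEps, lt_irrefl, neg_lt_zero.mpr hε]
    · convert p1_hasDerivAt ε (-ε) using 1; ring
    · convert p2_hasDerivAt ε hε (-ε) using 1; field_simp; ring
  · rcases lt_trichotomy r 0 with h0 | h0 | h0
    · have heq : ∀ᶠ x in nhds r, kEps ε x = -(x ^ 3 / ε) * (x / (2 * ε) + 4 / 3) := by
        filter_upwards [Ioo_mem_nhds h h0] with x hx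
        simp [kEps, not_lt.mpr hx.1.le, hx.2]
      have := (p2_hasDerivAt ε hε r).congr_of_eventuallyEq heq
      simpa [kEps', not_lt.mpr h.le, h0] using this
    · subst h0
      have hk' : kEps' ε 0 = 0 := by simp [kEps', not_lt.mpr hε.le]
      rw [hk']
      apply glue (f := fun x : ℝ => -(x ^ 3 / ε) * (x / (2 * ε) + 4 / 3))
        (g := fun _ : ℝ => (0 : ℝ))
      · have hmem : Ioc (-ε) 0 ∈ nhdsWithin 0 (Iic 0) :=
          Ioc_mem_nhdsLE (neg_lt_zero.mpr hε)
        filter_upwards [hmem] with x hx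
        rcases lt_or_eq_of_le hx.2 with hx2 | hx2
        · simp [kEps, not_lt.mpr hx.1.le, hx2]
        · subst hx2; simp [kEps, not_lt.mpr hε.le]
      · filter_upwards [self_mem_nhdsWithin] with x (hx : (0:ℝ) ≤ x)
        simp [kEps, not_lt.mpr (neg_nonpos_of_nonneg hε.le |>.trans hx), not_lt.mpr hx]
      · simp [kEps, not_lt.mpr hε.le]
      · simp [kEps, not_lt.mpr hε.le]
      · convert p2_hasDerivAt ε hε 0 using 1; simp
      · exact hasDerivAt_const 0 0
    · have heq : ∀ᶠ x in nhds r, kEps ε x = 0 := by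
        filter_upwards [Ioi_mem_nhds h0] with x hx
        simp [kEps, not_lt.mpr (neg_nonpos_of_nonneg hε.le |>.trans (mem_Ioi.mp hx).le), not_lt.mpr (mem_Ioi.mp hx).le]
      have := (hasDerivAt_const r (0:ℝ)).congr_of_eventuallyEq heq
      simpa [kEps', not_lt.mpr h.le, not_lt.mpr h0.le] using this

lemma q2_hasDerivAt (ε : ℝ) (hε : 0 < ε) (r : ℝ) :
    HasDerivAt (fun x : ℝ => -(2 * x ^ 3 / ε ^ 2 + 4 * x ^ 2 / ε))
      (-(6 * r ^ 2 / ε ^ 2 + 8 * r / ε)) r := by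
  have h3 : HasDerivAt (fun x : ℝ => x ^ 3) (3 * r ^ 2) r := by
    simpa using hasDerivAt_pow 3 r
  have h2 : HasDerivAt (fun x : ℝ => x ^ 2) (2 * r) r := by
    simpa using hasDerivAt_pow 2 r
  have hA : HasDerivAt (fun x : ℝ => 2 * x ^ 3 / ε ^ 2) (2 * (3 * r ^ 2) / ε ^ 2) r :=
    ((h3.const_mul 2).div_const (ε ^ 2))
  have hB : HasDerivAt (fun x : ℝ => 4 * x ^ 2 / ε) (4 * (2 * r) / ε) r :=
    ((h2.const_mul 4).div_const ε)
  have := (hA.add hB).neg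
  refine this.congr_deriv ?_
  ring

lemma hasDerivAt_kEps' (ε : ℝ) (hε : 0 < ε) (r : ℝ) :
    HasDerivAt (kEps' ε) (kEps'' ε r) r := by
  rcases lt_trichotomy r (-ε) with h | h | h
  · have heq : ∀ᶠ x in nhds r, kEps' ε x = 2 * x := by
      filter_upwards [Iio_mem_nhds h] with x (hx : x < -ε)
      simp [kEps', hx]
    have hlin : HasDerivAt (fun x : ℝ => 2 * x) (2 : ℝ) r := by
      simpa using (hasDerivAt_id r).const_mul (2 : ℝ)
    have := hlin.congr_of_eventuallyEq heq
    simpa [kEps'', h] using this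
  · subst h
    have hk' : kEps'' ε (-ε) = 2 := by
      simp only [kEps'', lt_irrefl, if_false, neg_lt_zero.mpr hε, if_true]
      field_simp
      ring
    rw [hk']
    apply glue (f := fun x : ℝ => 2 * x)
      (g := fun x : ℝ => -(2 * x ^ 3 / ε ^ 2 + 4 * x ^ 2 / ε))
    · filter_upwards [self_mem_nhdsWithin] with x (hx : x ≤ -ε)
      rcases lt_or_eq_of_le hx with hx | hx
      · simp [kEps', hx]
      · subst hx
        simp only [kEps', lt_irrefl, if_false, neg_lt_zero.mpr hε, if_true]
        field_simp
        ring
    · have hmem : Ico (-ε) 0 ∈ nhdsWithin (-ε) (Ici (-ε)) :=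
        Ico_mem_nhdsGE (neg_lt_zero.mpr hε)
      filter_upwards [hmem] with x hx
      simp [kEps', not_lt.mpr hx.1, hx.2]
    · simp only [kEps', lt_irrefl, if_false, neg_lt_zero.mpr hε, if_true]
      field_simp
      ring
    · simp [kEps', lt_irrefl, neg_lt_zero.mpr hε]
    · simpa using (hasDerivAt_id (-ε)).const_mul (2 : ℝ)
    · convert q2_hasDerivAt ε hε (-ε) using 1; field_simp; ring
  · rcases lt_trichotomy r 0 with h0 | h0 | h0
    · have heq : ∀ᶠ x in nhds r, kEps' ε x = -(2 * x ^ 3 / ε ^ 2 + 4 * x ^ 2 / ε) := by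
        filter_upwards [Ioo_mem_nhds h h0] with x hx
        simp [kEps', not_lt.mpr hx.1.le, hx.2]
      have := (q2_hasDerivAt ε hε r).congr_of_eventuallyEq heq
      simpa [kEps'', not_lt.mpr h.le, h0] using this
    · subst h0
      have hk' : kEps'' ε 0 = 0 := by simp [kEps'', not_lt.mpr hε.le]
      rw [hk']
      apply glue (f := fun x : ℝ => -(2 * x ^ 3 / ε ^ 2 + 4 * x ^ 2 / ε))
        (g := fun _ : ℝ => (0 : ℝ))
      · have hmem : Ioc (-ε) 0 ∈ nhdsWithin 0 (Iic 0) :=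
          Ioc_mem_nhdsLE (neg_lt_zero.mpr hε)
        filter_upwards [hmem] with x hx
        rcases lt_or_eq_of_le hx.2 with hx2 | hx2
        · simp [kEps', not_lt.mpr hx.1.le, hx2]
        · subst hx2; simp [kEps', not_lt.mpr hε.le]
      · filter_upwards [self_mem_nhdsWithin] with x (hx : (0:ℝ) ≤ x)
        simp [kEps', not_lt.mpr (neg_nonpos_of_nonneg hε.le |>.trans hx), not_lt.mpr hx]
      · simp [kEps', not_lt.mpr hε.le]
      · simp [kEps', not_lt.mpr hε.le]
      · convert q2_hasDerivAt ε hε 0 using 1; simp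
      · exact hasDerivAt_const 0 0
    · have heq : ∀ᶠ x in nhds r, kEps' ε x = 0 := by
        filter_upwards [Ioi_mem_nhds h0] with x hx
        simp [kEps', not_lt.mpr (neg_nonpos_of_nonneg hε.le |>.trans (mem_Ioi.mp hx).le), not_lt.mpr (mem_Ioi.mp hx).le]
      have := (hasDerivAt_const r (0:ℝ)).congr_of_eventuallyEq heq
      simpa [kEps'', not_lt.mpr h.le, not_lt.mpr h0.le] using this

theorem kEps_second_deriv_nonneg (ε : ℝ) (hε : 0 < ε) :
    ∀ r : ℝ, 0 ≤ deriv (deriv (kEps ε)) r := by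
  intro r
  have h1 : deriv (kEps ε) = kEps' ε := funext fun x => (hasDerivAt_kEps ε hε x).deriv
  rw [h1, (hasDerivAt_kEps' ε hε r).deriv]
  unfold kEps''
  split_ifs with h1 h2
  · norm_num
  · have key : -(6 * r ^ 2 / ε ^ 2 + 8 * r / ε) = (-(6 * r ^ 2 + 8 * r * ε)) / ε ^ 2 := by
      field_simp
    rw [key]
    apply div_nonneg _ (sq_nonneg ε)
    nlinarith [not_lt.mp h1]
  · exact le_refl 0
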